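/- Let G be a rooted graph with root r. If for any two vertices u and v of G there exists a pseudo-median of the triple (u, v, r) of size 0 (i.e., a median), then every daisy graph of G with respect to r is an isometric subgraph of G. -/

import Mathlib

open SimpleGraph

namespace Daisy

variable {V : Type*}

/-- The interval `I_G(u,v)`: vertices lying on shortest `u,v`-paths. -/
def interval (G : SimpleGraph V) (u v : V) : Set V :=
  {x | G.dist u x + G.dist x v = G.dist u v}

/-- The vertex set of the daisy graph of `G` with respect to the root `r`, generated by `X`. -/
def daisySet (G : SimpleGraph V) (r : V) (X : Set V) : Set V :=
  ⋃ v ∈ X, interval G r v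

/-- The subgraph of `G` induced by `S` is an isometric subgraph of `G`. -/
def IsIsometricSubset (G : SimpleGraph V) (S : Set V) : Prop :=
  ∀ u v : S, (G.induce S).dist u v = G.dist u.1 v.1

/-- Some shortest `u,v`-path of `G` contains both `x` and `y`. -/
def OnShortestPath (G : SimpleGraph V) (u v x y : V) : Prop :=
  ∃ p : G.Walk u v, p.length = G.dist u v ∧ x ∈ p.support ∧ y ∈ p.support

/-- Conditions 1 and 2 of the definition of a pseudo-median `(x,y,z)` of the triple `(u,v,w)`. -/
def PseudoMedianConds (G : SimpleGraph V) (u v w x y z : V) : Prop :=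
  OnShortestPath G u v x y ∧ OnShortestPath G v w y z ∧ OnShortestPath G u w x z ∧
  G.dist x y = G.dist y z ∧ G.dist y z = G.dist x z

/-- `(x,y,z)` is a pseudo-median of the triple `(u,v,w)` in `G`:
it satisfies the path and equidistance conditions, and `d(x,y)` is minimal under them. -/
def IsPseudoMedian (G : SimpleGraph V) (u v w x y z : V) : Prop :=
  PseudoMedianConds G u v w x y z ∧
  ∀ x' y' z' : V, PseudoMedianConds G u v w x' y' z' → G.dist x y ≤ G.dist x' y'

/-- The triple `(u,v,w)` has a pseudo-median of size `s` in `G`. -/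
def HasPseudoMedianOfSize (G : SimpleGraph V) (u v w : V) (s : ℕ) : Prop :=
  ∃ x y z : V, IsPseudoMedian G u v w x y z ∧ G.dist x y = s

lemma dist_add_of_mem_support (G : SimpleGraph V) (hconn : G.Connected)
    {u v m : V} (p : G.Walk u v) (hp : p.length = G.dist u v) (hm : m ∈ p.support) :
    G.dist u m + G.dist m v = G.dist u v := by
  classical
  have h1 : G.dist u m ≤ (p.takeUntil m hm).length := G.dist_le _
  have h2 : G.dist m v ≤ (p.dropUntil m hm).length := G.dist_le _
  have h3 := congrArg Walk.length (p.take_spec hm)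
  rw [Walk.length_append] at h3
  have h4 := hconn.dist_triangle (u := u) (v := m) (w := v)
  omega

lemma exists_walk_induce (G : SimpleGraph V) (S : Set V) :
    ∀ {u v : V} (p : G.Walk u v) (hs : ∀ x ∈ p.support, x ∈ S),
    ∃ q : (G.induce S).Walk ⟨u, hs u p.start_mem_support⟩ ⟨v, hs v p.end_mem_support⟩,
      q.length = p.length
  | _, _, Walk.nil, hs => ⟨Walk.nil, rfl⟩
  | u, v, Walk.cons ha p, hs => by
    have hs' : ∀ x ∈ p.support, x ∈ S := fun x hx => hs x (by simp [hx])
    obtain ⟨q, hq⟩ := exists_walk_induce G S p hs'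
    exact ⟨Walk.cons (by exact ha) q, congrArg (· + 1) hq⟩


/-- If for any two vertices `u`, `v` of the connected rooted graph `G` with
root `r` the triple `(u,v,r)` has a pseudo-median of size 0 (a median), then every daisy graph
of `G` with respect to `r` is an isometric subgraph of `G`. -/
lemma helper_dist
    (G : SimpleGraph V) (hconn : G.Connected) (r : V)
    (h : ∀ u v : V, HasPseudoMedianOfSize G u v r 0) (X : Set V)
    (u v : V) (hu2 : u ∈ daisySet G r X) (hv2 : v ∈ daisySet G r X) :
    (G.induce (daisySet G r X)).dist ⟨u, hu2⟩ ⟨v, hv2⟩ = G.dist u v := by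
  have hu2' := hu2
  have hv2' := hv2
  simp only [daisySet, Set.mem_iUnion] at hu2' hv2'
  obtain ⟨a, ha, hua⟩ := hu2'
  obtain ⟨b, hb, hvb⟩ := hv2'
  obtain ⟨x, y, z, ⟨⟨⟨p1, hp1, hx1, hy1⟩, ⟨p2, hp2, hy2, hz2⟩, ⟨p3, hp3, hx3, hz3⟩,
    hd1, hd2⟩, _⟩, hsz⟩ := h u v
  have hxy : x = y := hconn.dist_eq_zero_iff.mp hsz
  have hyz : y = z := hconn.dist_eq_zero_iff.mp (by rw [← hd1]; exact hsz)
  subst hxy; subst hyz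
  set m := x
  have e1 : G.dist u m + G.dist m v = G.dist u v :=
    dist_add_of_mem_support G hconn p1 hp1 hx1
  have e2 : G.dist v m + G.dist m r = G.dist v r :=
    dist_add_of_mem_support G hconn p2 hp2 hy2
  have e3 : G.dist u m + G.dist m r = G.dist u r :=
    dist_add_of_mem_support G hconn p3 hp3 hx3
  -- general claim: vertices on shortest walks from a daisy vertex to m are in S
  have key : ∀ (c u' : V), c ∈ X → G.dist r u' + G.dist u' c = G.dist r c →
      G.dist u' m + G.dist m r = G.dist u' r →
      ∀ (pm : G.Walk u' m), pm.length = G.dist u' m →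
      ∀ w ∈ pm.support, w ∈ daisySet G r X := by
    intro c u' hc hintv hm pm hpm w hw
    have ew : G.dist u' w + G.dist w m = G.dist u' m :=
      dist_add_of_mem_support G hconn pm hpm hw
    have t1 := hconn.dist_triangle (u := r) (v := w) (w := u')
    have t2 := hconn.dist_triangle (u := r) (v := m) (w := w)
    have t3 := hconn.dist_triangle (u := r) (v := w) (w := c)
    have t4 := hconn.dist_triangle (u := w) (v := u') (w := c)
    have c1 : G.dist r m = G.dist m r := G.dist_comm
    have c2 : G.dist m w = G.dist w m := G.dist_comm
    have c3 : G.dist w u' = G.dist u' w := G.dist_comm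
    have c4 : G.dist m u' = G.dist u' m := G.dist_comm
    have c5 : G.dist r u' = G.dist u' r := G.dist_comm
    have hwS : G.dist r w + G.dist w c = G.dist r c := by omega
    simp only [daisySet, Set.mem_iUnion]
    exact ⟨c, hc, hwS⟩
  -- shortest walks u-m and v-m
  obtain ⟨pm1, hpm1⟩ := (hconn.preconnected u m).exists_walk_length_eq_dist
  obtain ⟨pm2, hpm2⟩ := (hconn.preconnected v m).exists_walk_length_eq_dist
  have hs1 : ∀ w ∈ pm1.support, w ∈ daisySet G r X := key a u ha hua e3 pm1 hpm1
  have hs2 : ∀ w ∈ pm2.support, w ∈ daisySet G r X := key b v hb hvb e2 pm2 hpm2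
  have hp : ∀ w ∈ (pm1.append pm2.reverse).support, w ∈ daisySet G r X := by
    intro w hw
    rw [Walk.mem_support_append_iff] at hw
    rcases hw with hw | hw
    · exact hs1 w hw
    · exact hs2 w (by rwa [Walk.support_reverse, List.mem_reverse] at hw)
  obtain ⟨q, hq⟩ := exists_walk_induce G (daisySet G r X) (pm1.append pm2.reverse) hp
  have hlen : q.length = G.dist u v := by
    have c : G.dist v m = G.dist m v := G.dist_comm
    rw [hq, Walk.length_append, Walk.length_reverse, hpm1, hpm2, c, e1]
  refine le_antisymm ?_ ?_
  · calc (G.induce (daisySet G r X)).dist ⟨u, hu2⟩ ⟨v, hv2⟩ ≤ q.length := dist_le q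
      _ = G.dist u v := hlen
  · -- map a shortest induced walk down
    obtain ⟨q0, hq0⟩ := (q.reachable).exists_walk_length_eq_dist
    have : G.dist u v ≤ (q0.map ⟨Subtype.val, fun hadj => hadj⟩).length := G.dist_le _
    rwa [Walk.length_map, hq0] at this


theorem daisy_isometric_of_pseudoMedian_size_zero
    (G : SimpleGraph V) (hconn : G.Connected) (r : V)
    (h : ∀ u v : V, HasPseudoMedianOfSize G u v r 0) :
    ∀ X : Set V, IsIsometricSubset G (daisySet G r X) :=
  fun X u v => helper_dist G hconn r h X u.1 v.1 u.2 v.2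

end Daisy
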